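/- Let $G$ be a finite group. An element $\alpha$ of the group of singular orbit data $\mathbb{B}_G$ satisfies $2\cdot\alpha=0$ if and only if $\alpha$ can be represented by a multiset of conjugacy classes $[\hat{\gamma_1},\ldots,\hat{\gamma_q}]$ such that each $\gamma_i$ is conjugate in $G$ to $\gamma_i^{-1}$ (the empty multiset being allowed). -/

import Mathlib

open Finsupp

/-- The natural map from conjugacy classes of `G` to the abelianization of `G`. -/
def conjToAb {G : Type*} [Group G] : ConjClasses G → Abelianization G :=
  Quotient.lift Abelianization.of (fun a b (h : IsConj a b) => by
    obtain ⟨c, hc⟩ := h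
    have : Abelianization.of (c * a) = Abelianization.of (b * c) := by
      rw [hc.eq]
    simpa [map_mul, mul_comm] using this)

@[simp] lemma conjToAb_mk {G : Type*} [Group G] (a : G) :
    conjToAb (ConjClasses.mk a) = Abelianization.of a := rfl

/-- The degree map sending a formal `ℤ`-combination of conjugacy classes to the corresponding
product in the abelianization. -/
noncomputable def degMap (G : Type*) [Group G] :
    (ConjClasses G →₀ ℤ) →+ Additive (Abelianization G) :=
  Finsupp.liftAddHom (fun c => (zmultiplesHom _) (Additive.ofMul (conjToAb c)))

@[simp] lemma degMap_single {G : Type*} [Group G] (a : G) (k : ℤ) :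
    degMap G (Finsupp.single (ConjClasses.mk a) k)
      = k • (Additive.ofMul (Abelianization.of a)) := by
  simp [degMap]

/-- `lambdaKer G` consists of the formal `ℤ`-combinations of conjugacy classes whose product
lies in the commutator subgroup; these are the (differences of) singular orbit data. -/
noncomputable def lambdaKer (G : Type*) [Group G] : AddSubgroup (ConjClasses G →₀ ℤ) :=
  (degMap G).ker

/-- The subgroup of relations: the class of the identity, and the cancelling pairs
`[γ̂, γ̂⁻¹]`. -/
noncomputable def bRel (G : Type*) [Group G] : AddSubgroup (ConjClasses G →₀ ℤ) :=
  AddSubgroup.closure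
    (insert (Finsupp.single (ConjClasses.mk (1 : G)) 1)
      {x | ∃ γ : G, x = Finsupp.single (ConjClasses.mk γ) 1
        + Finsupp.single (ConjClasses.mk γ⁻¹) 1})

/-- The group of singular orbit data `𝔹_G`. -/
abbrev BG (G : Type*) [Group G] :=
  (lambdaKer G) ⧸ ((bRel G).addSubgroupOf (lambdaKer G))

/-- The formal sum of conjugacy classes corresponding to a finite (multi)set of group
elements, presented as a list. -/
noncomputable def bdatum (G : Type*) [Group G] (l : List G) : ConjClasses G →₀ ℤ :=
  (l.map (fun γ => Finsupp.single (ConjClasses.mk γ) (1 : ℤ))).sum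

lemma degMap_bdatum {G : Type*} [Group G] (l : List G) :
    degMap G (bdatum G l) = Additive.ofMul (Abelianization.of l.prod) := by
  induction l with
  | nil => simp [bdatum]
  | cons a t ih =>
      have : bdatum G (a :: t) = Finsupp.single (ConjClasses.mk a) 1 + bdatum G t := by
        simp [bdatum]
      rw [this, map_add, ih, degMap_single]
      simp [← ofMul_mul]

lemma bdatum_mem_lambdaKer {G : Type*} [Group G] (l : List G)
    (h : l.prod ∈ commutator G) : bdatum G l ∈ lambdaKer G := by
  have : Abelianization.of l.prod = 1 := (QuotientGroup.eq_one_iff _).2 h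
  simp [lambdaKer, AddMonoidHom.mem_ker, degMap_bdatum, this]

lemma bdatum_mem_lambdaKer_of_prod_eq_one {G : Type*} [Group G] (l : List G)
    (h : l.prod = 1) : bdatum G l ∈ lambdaKer G :=
  bdatum_mem_lambdaKer l (by simp [h, Subgroup.one_mem])

/-- The element of `𝔹_G` determined by a list of group elements whose product lies in the
commutator subgroup. -/
noncomputable def bmk {G : Type*} [Group G] (l : List G) (h : bdatum G l ∈ lambdaKer G) :
    BG G :=
  QuotientAddGroup.mk (⟨bdatum G l, h⟩ : lambdaKer G)

section Aux

variable {G : Type*} [Group G]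

lemma IsConj.inv'' {a b : G} (h : IsConj a b) : IsConj a⁻¹ b⁻¹ := by
  rw [isConj_iff] at h ⊢
  obtain ⟨c, hc⟩ := h
  exact ⟨c, by rw [← hc, conj_inv]⟩

/-- The inverse map on conjugacy classes. -/
def cinv : ConjClasses G → ConjClasses G :=
  Quotient.lift (fun a => ConjClasses.mk a⁻¹)
    (fun _ _ (h : IsConj _ _) => ConjClasses.mk_eq_mk_iff_isConj.2 h.inv'')

@[simp] lemma cinv_mk (a : G) : cinv (ConjClasses.mk a) = ConjClasses.mk a⁻¹ := rfl

@[simp] lemma cinv_cinv (c : ConjClasses G) : cinv (cinv c) = c := by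
  induction c using Quotient.inductionOn with
  | h a => show ConjClasses.mk a⁻¹⁻¹ = _; rw [inv_inv]; rfl

lemma cinv_one : cinv (ConjClasses.mk (1 : G)) = ConjClasses.mk (1 : G) := by
  rw [cinv_mk, inv_one]

lemma mk_out' (c : ConjClasses G) : ConjClasses.mk (Quotient.out c) = c :=
  Quotient.out_eq c

lemma single_apply_cinv (c d : ConjClasses G) (k : ℤ) :
    (Finsupp.single c k) (cinv d) = (Finsupp.single (cinv c) k) d := by
  classical
  simp only [Finsupp.single_apply]
  rcases eq_or_ne c (cinv d) with h | h
  · rw [if_pos h, if_pos (by rw [h, cinv_cinv])]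
  · rw [if_neg h, if_neg fun hh => h (by rw [← hh, cinv_cinv])]

lemma pair_mem_bRel (γ : G) :
    Finsupp.single (ConjClasses.mk γ) 1 + Finsupp.single (ConjClasses.mk γ⁻¹) 1 ∈ bRel G :=
  AddSubgroup.subset_closure (Set.mem_insert_iff.2 (Or.inr ⟨γ, rfl⟩))

lemma pairc_mem_bRel (c : ConjClasses G) :
    Finsupp.single c 1 + Finsupp.single (cinv c) 1 ∈ bRel G := by
  have h := pair_mem_bRel (G := G) (Quotient.out c)
  have h1 : ConjClasses.mk (Quotient.out c) = c := mk_out' c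
  have h2 : ConjClasses.mk (Quotient.out c)⁻¹ = cinv c := by
    rw [← cinv_mk, h1]
  rwa [h1, h2] at h

lemma pairk_mem_bRel (c : ConjClasses G) (k : ℤ) :
    Finsupp.single c k + Finsupp.single (cinv c) k ∈ bRel G := by
  have h := AddSubgroup.zsmul_mem _ (pairc_mem_bRel c) k
  simpa [smul_add, Finsupp.smul_single, smul_eq_mul, mul_one] using h

lemma single_even_mem_bRel (c : ConjClasses G) (hc : cinv c = c) {k : ℤ} (hk : Even k) :
    Finsupp.single c k ∈ bRel G := by
  obtain ⟨m, hm⟩ := hk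
  have h := pairk_mem_bRel c m
  rw [hc] at h
  rw [hm, Finsupp.single_add]
  exact h

lemma single_one_mem_bRel (k : ℤ) :
    Finsupp.single (ConjClasses.mk (1 : G)) k ∈ bRel G := by
  have h1 : Finsupp.single (ConjClasses.mk (1 : G)) (1 : ℤ) ∈ bRel G :=
    AddSubgroup.subset_closure (Set.mem_insert _ _)
  have h := AddSubgroup.zsmul_mem _ h1 k
  simpa [Finsupp.smul_single, smul_eq_mul, mul_one] using h

/-- The subgroup of `cinv`-symmetric functions. -/
noncomputable def symmGrp (G : Type*) [Group G] : AddSubgroup (ConjClasses G →₀ ℤ) where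
  carrier := {x | ∀ c, x c = x (cinv c)}
  zero_mem' := fun _ => rfl
  add_mem' := fun {a b} ha hb c => by
    simp only [Finsupp.add_apply]; rw [ha c, hb c]
  neg_mem' := fun {a} ha c => by
    simp only [Finsupp.neg_apply]; rw [ha c]

lemma bRel_le_symmGrp : bRel G ≤ symmGrp G := by
  rw [bRel]
  refine (AddSubgroup.closure_le _).2 ?_
  rintro x (rfl | ⟨γ, rfl⟩)
  · intro c
    rw [show ((Finsupp.single (ConjClasses.mk (1:G)) (1:ℤ)) (cinv c)) =
        (Finsupp.single (cinv (ConjClasses.mk (1:G))) (1:ℤ)) c from single_apply_cinv _ _ _,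
      cinv_one]
  · intro c
    simp only [Finsupp.add_apply]
    rw [show ((Finsupp.single (ConjClasses.mk γ) (1:ℤ)) (cinv c)) =
        (Finsupp.single (cinv (ConjClasses.mk γ)) (1:ℤ)) c from single_apply_cinv _ _ _,
      show ((Finsupp.single (ConjClasses.mk γ⁻¹) (1:ℤ)) (cinv c)) =
        (Finsupp.single (cinv (ConjClasses.mk γ⁻¹)) (1:ℤ)) c from single_apply_cinv _ _ _]
    simp only [cinv_mk, inv_inv]
    exact add_comm _ _

lemma bRel_le_lambdaKer : bRel G ≤ lambdaKer G := by
  rw [bRel, lambdaKer]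
  refine (AddSubgroup.closure_le _).2 ?_
  rintro x (rfl | ⟨γ, rfl⟩) <;> simp only [SetLike.mem_coe, AddMonoidHom.mem_ker]
  · rw [degMap_single]; simp
  · rw [map_add, degMap_single, degMap_single]
    simp [← ofMul_mul]

lemma bdatum_add_self_mem_bRel (l : List G) (hl : ∀ γ ∈ l, IsConj γ γ⁻¹) :
    bdatum G l + bdatum G l ∈ bRel G := by
  induction l with
  | nil => simpa [bdatum] using (bRel G).zero_mem
  | cons a t ih =>
    have hb : bdatum G (a :: t) = Finsupp.single (ConjClasses.mk a) 1 + bdatum G t := by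
      simp [bdatum]
    have hmk : ConjClasses.mk a⁻¹ = ConjClasses.mk a :=
      (ConjClasses.mk_eq_mk_iff_isConj.2 (hl a (List.mem_cons_self (a := a) (l := t)))).symm
    have hpair : Finsupp.single (ConjClasses.mk a) (1:ℤ)
        + Finsupp.single (ConjClasses.mk a) 1 ∈ bRel G := by
      have := pair_mem_bRel a
      rwa [hmk] at this
    have heq : bdatum G (a :: t) + bdatum G (a :: t)
        = (Finsupp.single (ConjClasses.mk a) 1 + Finsupp.single (ConjClasses.mk a) 1)
          + (bdatum G t + bdatum G t) := by
      rw [hb]; abel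
    rw [heq]
    exact add_mem hpair (ih fun γ hγ => hl γ (List.mem_cons_of_mem _ hγ))

lemma exists_list_rep (x : ConjClasses G →₀ ℤ) (hs : ∀ c, x c = x (cinv c)) :
    ∃ l : List G, (∀ γ ∈ l, IsConj γ γ⁻¹) ∧ x - bdatum G l ∈ bRel G := by
  classical
  suffices H : ∀ n (x : ConjClasses G →₀ ℤ), x.support.card = n →
      (∀ c, x c = x (cinv c)) →
      ∃ l : List G, (∀ γ ∈ l, IsConj γ γ⁻¹) ∧ x - bdatum G l ∈ bRel G from
    H _ x rfl hs
  intro n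
  induction n using Nat.strong_induction_on with
  | _ n IH =>
    intro x hcard hs
    rcases Finset.eq_empty_or_nonempty x.support with hsupp | ⟨c, hc⟩
    · refine ⟨[], by simp, ?_⟩
      rw [Finsupp.support_eq_empty.1 hsupp]
      simpa [bdatum] using (bRel G).zero_mem
    by_cases hcc : cinv c = c
    · -- self-inverse class
      set y := x.erase c with hy
      have hyx : y = x - Finsupp.single c (x c) := Finsupp.erase_eq_sub_single x c
      have hycard : y.support.card < n := by
        rw [hy, Finsupp.support_erase, ← hcard]
        exact Finset.card_erase_lt_of_mem hc
      have hys : ∀ d, y d = y (cinv d) := by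
        intro d
        rw [hyx]
        simp only [Finsupp.sub_apply]
        rw [hs d, single_apply_cinv, hcc]
      obtain ⟨l', hl', hmem'⟩ := IH _ hycard y rfl hys
      by_cases h1 : c = ConjClasses.mk (1 : G)
      · refine ⟨l', hl', ?_⟩
        have heq : x - bdatum G l' = (y - bdatum G l') + Finsupp.single c (x c) := by
          rw [hyx]; abel
        rw [heq]
        exact add_mem hmem' (h1 ▸ single_one_mem_bRel _)
      · rcases Int.even_or_odd (x c) with he | ho
        · refine ⟨l', hl', ?_⟩
          have heq : x - bdatum G l' = (y - bdatum G l') + Finsupp.single c (x c) := by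
            rw [hyx]; abel
          rw [heq]
          exact add_mem hmem' (single_even_mem_bRel c hcc he)
        · refine ⟨Quotient.out c :: l', ?_, ?_⟩
          · intro γ hγ
            rcases List.mem_cons.1 hγ with rfl | hmem
            · refine ConjClasses.mk_eq_mk_iff_isConj.1 ?_
              rw [mk_out', ← cinv_mk, mk_out', hcc]
            · exact hl' γ hmem
          · have hb : bdatum G (Quotient.out c :: l')
                = Finsupp.single c 1 + bdatum G l' := by
              simp [bdatum, mk_out']
            have heq : x - bdatum G (Quotient.out c :: l')
                = (y - bdatum G l') + Finsupp.single c (x c - 1) := by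
              rw [hb, hyx, Finsupp.single_sub]; abel
            rw [heq]
            exact add_mem hmem' (single_even_mem_bRel c hcc (by
              simpa using ho.sub_odd odd_one))
    · -- genuine pair
      have hxcc : x (cinv c) = x c := (hs c).symm
      set y := (x.erase c).erase (cinv c) with hy
      have hv : (x.erase c) (cinv c) = x c := by
        rw [Finsupp.erase_ne hcc, hxcc]
      have hyx : y = x - Finsupp.single c (x c) - Finsupp.single (cinv c) (x c) := by
        rw [hy, Finsupp.erase_eq_sub_single (x.erase c), hv, Finsupp.erase_eq_sub_single x]
      have hycard : y.support.card < n := by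
        rw [hy, Finsupp.support_erase, ← hcard]
        exact lt_of_le_of_lt (Finset.card_erase_le)
          (by rw [Finsupp.support_erase]; exact Finset.card_erase_lt_of_mem hc)
      have hys : ∀ d, y d = y (cinv d) := by
        intro d
        rw [hyx]
        simp only [Finsupp.sub_apply]
        rw [hs d, single_apply_cinv c d, single_apply_cinv (cinv c) d, cinv_cinv]
        ring
      obtain ⟨l', hl', hmem'⟩ := IH _ hycard y rfl hys
      refine ⟨l', hl', ?_⟩
      have heq : x - bdatum G l' = (y - bdatum G l')
          + (Finsupp.single c (x c) + Finsupp.single (cinv c) (x c)) := by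
        rw [hyx]; abel
      rw [heq]
      exact add_mem hmem' (pairk_mem_bRel c (x c))

end Aux

/-- An element `α ∈ 𝔹_G` satisfies `2 • α = 0` iff it can be represented
by a multiset of conjugacy classes `[γ̂₁, …, γ̂_q]` such that each `γᵢ` is conjugate to
`γᵢ⁻¹` (the empty multiset being allowed). -/
theorem two_torsion_iff_self_inverse_classes (G : Type*) [Group G] [Finite G] (α : BG G) :
    2 • α = 0 ↔
      ∃ (l : List G) (h : bdatum G l ∈ lambdaKer G),
        (∀ γ ∈ l, IsConj γ γ⁻¹) ∧ bmk l h = α := by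
  constructor
  · induction α using QuotientAddGroup.induction_on with
    | H z =>
      intro h2
      have hmk : (2 : ℕ) • (QuotientAddGroup.mk z : BG G)
          = QuotientAddGroup.mk (z + z) := by
        rw [two_nsmul]; rfl
      have hzz : z + z ∈ (bRel G).addSubgroupOf (lambdaKer G) :=
        (QuotientAddGroup.eq_zero_iff _).1 (by rw [← hmk]; exact h2)
      have h2' : ((z : ConjClasses G →₀ ℤ) + z) ∈ bRel G := by
        simpa using AddSubgroup.mem_addSubgroupOf.1 hzz
      have hsymm : ∀ c, (z : ConjClasses G →₀ ℤ) c = (z : ConjClasses G →₀ ℤ) (cinv c) := by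
        intro c
        have h := bRel_le_symmGrp h2' c
        simp only [Finsupp.add_apply] at h
        omega
      obtain ⟨l, hl, hmem⟩ := exists_list_rep (z : ConjClasses G →₀ ℤ) hsymm
      have hbd : bdatum G l ∈ lambdaKer G := by
        have h1 : (z : ConjClasses G →₀ ℤ) - bdatum G l ∈ lambdaKer G :=
          bRel_le_lambdaKer hmem
        have h2'' := sub_mem z.2 h1
        simpa using h2''
      refine ⟨l, hbd, hl, ?_⟩
      rw [bmk]
      refine (QuotientAddGroup.eq (s := (bRel G).addSubgroupOf (lambdaKer G))).2 ?_
      rw [AddSubgroup.mem_addSubgroupOf]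
      have hco : ((-(⟨bdatum G l, hbd⟩ : lambdaKer G) + z : lambdaKer G) : ConjClasses G →₀ ℤ)
          = (z : ConjClasses G →₀ ℤ) - bdatum G l := by
        simp [sub_eq_neg_add]
      rw [hco]
      exact hmem
  · rintro ⟨l, h, hl, rfl⟩
    have hmk : (2 : ℕ) • (bmk l h : BG G)
        = QuotientAddGroup.mk ((⟨bdatum G l, h⟩ : lambdaKer G) + ⟨bdatum G l, h⟩) := by
      rw [two_nsmul]; rfl
    rw [hmk, QuotientAddGroup.eq_zero_iff, AddSubgroup.mem_addSubgroupOf]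
    simpa using bdatum_add_self_mem_bRel l hl
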